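/- arXiv:1903.11274 — 5 statements merged into one kernel-verified Lean document; each statement's English description precedes it below -/
import Mathlib

section
/- There exists a constant K > 0, depending only on a, b, C and q₀, such that q(τ) ≤ K e^{−min(a,b)τ/2} for all τ ≥ 0. -/
open Real Set Filter intervalIntegral

set_option maxHeartbeats 1000000

theorem stmt_9
    (a b C q₀ : ℝ) (ha : 0 < a) (hb : 0 < b) (hC : 0 < C) (hq₀ : 0 < q₀)
    (q q' : ℝ → ℝ) (hq0 : q 0 = q₀)
    (hqc : ContinuousOn q (Set.Ici 0))
    (hq'c : ContinuousOn q' (Set.Ici 0))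
    (hderiv : ∀ τ > (0:ℝ), HasDerivAt q (q' τ) τ)
    (hqpos : ∀ τ ≥ (0:ℝ), 0 < q τ)
    (hineq : ∀ τ > (0:ℝ), q' τ + (a - C * Real.exp (-b * τ)) * q τ ≤
      C * Real.exp (-b * τ) * (1 + ∫ σ in (0:ℝ)..τ, q σ))
    :
    ∃ K > (0:ℝ), ∀ τ ≥ (0:ℝ), q τ ≤ K * Real.exp (-(min a b) / 2 * τ) := by
  set μ : ℝ := min a b / 2 with hμdef
  set ε : ℝ := min a 1 with hεdef
  have hε0 : 0 < ε := lt_min ha one_pos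
  have hεa : ε ≤ a := min_le_left _ _
  have hε1 : ε ≤ 1 := min_le_right _ _
  have hμ0 : 0 < μ := by
    have := lt_min ha hb; simp only [hμdef]; linarith
  have hμa : μ ≤ a := by
    have : min a b ≤ a := min_le_left _ _
    simp only [hμdef]; linarith
  have hμb : μ < b := by
    have : min a b ≤ b := min_le_right _ _
    simp only [hμdef]; linarith
  -- basic facts about q on Ici 0
  have hqcont : ∀ τ > (0:ℝ), ContinuousAt q τ := by
    intro τ hτ
    exact hqc.continuousAt (mem_of_superset (Ioi_mem_nhds hτ) Ioi_subset_Ici_self)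
  have hint : ∀ t : ℝ, 0 ≤ t → IntervalIntegrable q MeasureTheory.volume 0 t := by
    intro t ht
    apply ContinuousOn.intervalIntegrable
    rw [uIcc_of_le ht]
    exact hqc.mono (Icc_subset_Ici_self)
  set Q : ℝ → ℝ := fun τ => 1 + ∫ σ in (0:ℝ)..τ, q σ with hQdef
  have hQ1 : ∀ τ ≥ (0:ℝ), 1 ≤ Q τ := by
    intro τ hτ
    have h0 : (0:ℝ) ≤ ∫ σ in (0:ℝ)..τ, q σ :=
      intervalIntegral.integral_nonneg hτ (fun x hx => (hqpos x hx.1).le)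
    simp only [hQdef]; linarith
  have hQderiv : ∀ τ > (0:ℝ), HasDerivAt Q (q τ) τ := by
    intro τ hτ
    have hmeas : StronglyMeasurableAtFilter q (nhds τ) MeasureTheory.volume := by
      refine ContinuousOn.stronglyMeasurableAtFilter isOpen_Ioi
        (hqc.mono Ioi_subset_Ici_self) τ hτ
    have h1 : HasDerivAt (fun u => ∫ σ in (0:ℝ)..u, q σ) (q τ) τ :=
      intervalIntegral.integral_hasDerivAt_right (hint τ hτ.le) hmeas (hqcont τ hτ)
    simpa [hQdef] using h1.const_add 1
  have hQcont : ∀ T : ℝ, 0 ≤ T → ContinuousOn Q (Icc 0 T) := by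
    intro T hT
    have hi : MeasureTheory.IntegrableOn q (uIcc (0:ℝ) T) MeasureTheory.volume := by
      rw [uIcc_of_le hT]
      exact (hqc.mono Icc_subset_Ici_self).integrableOn_Icc
    have := intervalIntegral.continuousOn_primitive_interval hi
    rw [uIcc_of_le hT] at this
    exact continuousOn_const.add this
  have hQ0 : Q 0 = 1 := by simp [hQdef]
  -- Step 1: boundedness of q and Q
  set g : ℝ → ℝ := fun x => (C / (ε * b)) * Real.exp (-b * x) with hgdef
  set F : ℝ → ℝ := fun x => (q x + ε * Q x) * Real.exp (g x) with hFdef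
  have hexpderiv : ∀ (c x : ℝ), HasDerivAt (fun y : ℝ => Real.exp (c * y))
      (Real.exp (c * x) * c) x := by
    intro c x
    have h0 : HasDerivAt (fun y : ℝ => c * y) c x := by
      simpa only [mul_one] using (hasDerivAt_id' x).const_mul c
    exact (Real.hasDerivAt_exp (c * x)).comp x h0
  have hgderiv : ∀ x : ℝ, HasDerivAt g (-(C / ε) * Real.exp (-b * x)) x := by
    intro x
    have h1 : HasDerivAt (fun x : ℝ => Real.exp (-b * x)) (Real.exp (-b * x) * (-b)) x :=
      hexpderiv (-b) x
    have h2 := h1.const_mul (C / (ε * b))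
    simp only [hgdef]
    refine h2.congr_deriv ?_
    field_simp [hb.ne', hε0.ne']
  have hFderiv : ∀ x > (0:ℝ), HasDerivAt F
      ((q' x + ε * q x) * Real.exp (g x) +
        (q x + ε * Q x) * (Real.exp (g x) * (-(C / ε) * Real.exp (-b * x)))) x := by
    intro x hx
    have hz : HasDerivAt (fun y => q y + ε * Q y) (q' x + ε * q x) x :=
      (hderiv x hx).add ((hQderiv x hx).const_mul ε)
    have he : HasDerivAt (fun y => Real.exp (g y)) (Real.exp (g x) * (-(C / ε) * Real.exp (-b * x))) x :=
      (Real.hasDerivAt_exp (g x)).comp x (hgderiv x)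
    exact hz.mul he
  have hF'nonpos : ∀ x > (0:ℝ),
      (q' x + ε * q x) * Real.exp (g x) +
        (q x + ε * Q x) * (Real.exp (g x) * (-(C / ε) * Real.exp (-b * x))) ≤ 0 := by
    intro x hx
    have hqx := hqpos x hx.le
    have hQx := hQ1 x hx.le
    have hi := hineq x hx
    have he : (0:ℝ) < Real.exp (-b * x) := Real.exp_pos _
    have hg : (0:ℝ) < Real.exp (g x) := Real.exp_pos _
    -- q' x + ε q x ≤ (C/ε) e^{-bx} (q x + ε Q x)
    have key : q' x + ε * q x ≤ (C / ε) * Real.exp (-b * x) * (q x + ε * Q x) := by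
      have h1 : q' x + ε * q x ≤ C * Real.exp (-b * x) * (q x + Q x) := by
        simp only [hQdef]; nlinarith [hi]
      have h2 : C * Real.exp (-b * x) * (q x + Q x) ≤
          (C / ε) * Real.exp (-b * x) * (q x + ε * Q x) := by
        rw [div_mul_eq_mul_div, div_mul_eq_mul_div, le_div_iff₀ hε0]
        nlinarith [mul_nonneg (mul_nonneg (mul_pos hC he).le (sub_nonneg.2 hε1)) hqx.le]
      exact h1.trans h2
    nlinarith [mul_le_mul_of_nonneg_right key hg.le]
  have hFanti : ∀ τ ≥ (0:ℝ), F τ ≤ F 0 := by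
    intro τ hτ
    have hconv : Convex ℝ (Icc (0:ℝ) τ) := convex_Icc _ _
    have hcont : ContinuousOn F (Icc 0 τ) := by
      apply ContinuousOn.mul
      · exact ((hqc.mono Icc_subset_Ici_self).add (continuousOn_const.mul (hQcont τ hτ)))
      · exact (Real.continuous_exp.comp (continuous_const.mul
          (Real.continuous_exp.comp (continuous_const.mul continuous_id)))).continuousOn
    have hdiff : DifferentiableOn ℝ F (interior (Icc 0 τ)) := by
      rw [interior_Icc]
      intro x hx
      exact ((hFderiv x hx.1).differentiableAt).differentiableWithinAt
    have hder : ∀ x ∈ interior (Icc (0:ℝ) τ), deriv F x ≤ 0 := by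
      rw [interior_Icc]
      intro x hx
      rw [(hFderiv x hx.1).deriv]
      exact hF'nonpos x hx.1
    have := antitoneOn_of_deriv_nonpos hconv hcont hdiff hder
      (left_mem_Icc.2 hτ) (right_mem_Icc.2 hτ) hτ
    exact this
  set M : ℝ := (q₀ + ε) * Real.exp (C / (ε * b)) with hMdef
  have hM0 : 0 < M := by positivity
  have hF0 : F 0 = M := by
    simp only [hFdef, hgdef, hMdef, hQ0, hq0, mul_zero, neg_zero, Real.exp_zero, mul_one]
  have hzleM : ∀ τ ≥ (0:ℝ), q τ + ε * Q τ ≤ M := by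
    intro τ hτ
    have h1 : F τ ≤ M := by rw [← hF0]; exact hFanti τ hτ
    have h2 : (1:ℝ) ≤ Real.exp (g τ) := by
      rw [Real.one_le_exp_iff]
      positivity
    have hz : 0 < q τ + ε * Q τ := by
      have := hqpos τ hτ; have := hQ1 τ hτ; nlinarith
    calc q τ + ε * Q τ ≤ (q τ + ε * Q τ) * Real.exp (g τ) := by nlinarith
      _ ≤ M := h1
  have hqleM : ∀ τ ≥ (0:ℝ), q τ ≤ M := by
    intro τ hτ
    have := hzleM τ hτ
    have := hQ1 τ hτ
    nlinarith
  have hQleM : ∀ τ ≥ (0:ℝ), Q τ ≤ M / ε := by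
    intro τ hτ
    have h1 := hzleM τ hτ
    have h2 := hqpos τ hτ
    rw [le_div_iff₀ hε0]
    nlinarith
  -- Step 2: decay
  set D : ℝ := C * (M + M / ε) with hDdef
  have hD0 : 0 < D := by positivity
  set K : ℝ := q₀ + D / (b - μ) with hKdef
  have hK0 : 0 < K := by
    have : 0 < D / (b - μ) := div_pos hD0 (by linarith)
    simp only [hKdef]; linarith
  refine ⟨K, hK0, ?_⟩
  intro τ hτ
  set w : ℝ → ℝ := fun x => Real.exp (μ * x) * q x + (D / (b - μ)) * Real.exp ((μ - b) * x)
    with hwdef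
  have hwderiv : ∀ x > (0:ℝ), HasDerivAt w
      ((Real.exp (μ * x) * μ) * q x + Real.exp (μ * x) * q' x +
        (D / (b - μ)) * (Real.exp ((μ - b) * x) * (μ - b))) x := by
    intro x hx
    have h1 : HasDerivAt (fun y : ℝ => Real.exp (μ * y)) (Real.exp (μ * x) * μ) x :=
      hexpderiv μ x
    have h2 : HasDerivAt (fun y : ℝ => Real.exp ((μ - b) * y))
        (Real.exp ((μ - b) * x) * (μ - b)) x :=
      hexpderiv (μ - b) x
    exact (h1.mul (hderiv x hx)).add (h2.const_mul (D / (b - μ)))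
  have hw'nonpos : ∀ x > (0:ℝ),
      (Real.exp (μ * x) * μ) * q x + Real.exp (μ * x) * q' x +
        (D / (b - μ)) * (Real.exp ((μ - b) * x) * (μ - b)) ≤ 0 := by
    intro x hx
    have hqx := hqpos x hx.le
    have hQx := hQ1 x hx.le
    have hqM := hqleM x hx.le
    have hQM := hQleM x hx.le
    have hi := hineq x hx
    have he : (0:ℝ) < Real.exp (-b * x) := Real.exp_pos _
    have hm : (0:ℝ) < Real.exp (μ * x) := Real.exp_pos _
    have hprod : Real.exp (μ * x) * Real.exp (-b * x) = Real.exp ((μ - b) * x) := by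
      rw [← Real.exp_add]; ring_nf
    have hbμ : b - μ ≠ 0 := ne_of_gt (by linarith)
    have hcoef : (D / (b - μ)) * (Real.exp ((μ - b) * x) * (μ - b)) =
        -D * Real.exp ((μ - b) * x) := by
      calc (D / (b - μ)) * (Real.exp ((μ - b) * x) * (μ - b))
          = -(D / (b - μ) * (b - μ)) * Real.exp ((μ - b) * x) := by ring
        _ = -D * Real.exp ((μ - b) * x) := by rw [div_mul_cancel₀ D hbμ]
    rw [hcoef]
    -- q' x + μ q x ≤ D e^{-bx}
    have key : q' x + μ * q x ≤ D * Real.exp (-b * x) := by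
      have h1 : q' x + μ * q x ≤ (μ - a) * q x + C * Real.exp (-b * x) * (q x + Q x) := by
        simp only [hQdef]; nlinarith [hi]
      have h2 : (μ - a) * q x ≤ 0 := mul_nonpos_of_nonpos_of_nonneg (by linarith) hqx.le
      have h3 : C * Real.exp (-b * x) * (q x + Q x) ≤ C * Real.exp (-b * x) * (M + M / ε) := by
        apply mul_le_mul_of_nonneg_left (by linarith) (by positivity)
      simp only [hDdef]; nlinarith
    have := mul_le_mul_of_nonneg_left key hm.le
    nlinarith [this, hprod]
  have hwanti : w τ ≤ w 0 := by
    have hconv : Convex ℝ (Icc (0:ℝ) τ) := convex_Icc _ _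
    have hcont : ContinuousOn w (Icc 0 τ) := by
      apply ContinuousOn.add
      · exact (Real.continuous_exp.comp (continuous_const.mul continuous_id)).continuousOn.mul
          (hqc.mono Icc_subset_Ici_self)
      · exact (continuous_const.mul
          (Real.continuous_exp.comp (continuous_const.mul continuous_id))).continuousOn
    have hdiff : DifferentiableOn ℝ w (interior (Icc 0 τ)) := by
      rw [interior_Icc]
      intro x hx
      exact ((hwderiv x hx.1).differentiableAt).differentiableWithinAt
    have hder : ∀ x ∈ interior (Icc (0:ℝ) τ), deriv w x ≤ 0 := by
      rw [interior_Icc]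
      intro x hx
      rw [(hwderiv x hx.1).deriv]
      exact hw'nonpos x hx.1
    exact antitoneOn_of_deriv_nonpos hconv hcont hdiff hder
      (left_mem_Icc.2 hτ) (right_mem_Icc.2 hτ) hτ
  have hw0 : w 0 = K := by
    simp only [hwdef, hKdef, hq0, mul_zero, Real.exp_zero, one_mul, mul_one]
  have hstep : Real.exp (μ * τ) * q τ ≤ K := by
    have h1 : 0 < (D / (b - μ)) * Real.exp ((μ - b) * τ) := by
      apply mul_pos (div_pos hD0 (by linarith)) (Real.exp_pos _)
    have := hwanti
    rw [hw0] at this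
    simp only [hwdef] at this
    calc Real.exp (μ * τ) * q τ
        ≤ Real.exp (μ * τ) * q τ + D / (b - μ) * Real.exp ((μ - b) * τ) :=
          le_add_of_nonneg_right h1.le
      _ ≤ K := this
  have hexp : Real.exp (-(min a b) / 2 * τ) = Real.exp (-(μ * τ)) := by
    congr 1
    simp only [hμdef]
    ring
  rw [hexp, Real.exp_neg, mul_comm K, inv_mul_eq_div, le_div_iff₀ (Real.exp_pos _), mul_comm]
  exact hstep
end

section
/- There exists Λ > 0, depending only on C and q₀, such that q(τ) ≤ 2 q₀ e^{Λτ} for all τ ≥ 0. -/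
open Real Set Filter intervalIntegral

theorem stmt_10
    (a b C q₀ : ℝ) (ha : 0 < a) (hb : 0 < b) (hC : 0 < C) (hq₀ : 0 < q₀)
    (q q' : ℝ → ℝ) (hq0 : q 0 = q₀)
    (hqc : ContinuousOn q (Set.Ici 0))
    (hq'c : ContinuousOn q' (Set.Ici 0))
    (hderiv : ∀ τ > (0:ℝ), HasDerivAt q (q' τ) τ)
    (hqpos : ∀ τ ≥ (0:ℝ), 0 < q τ)
    (hineq : ∀ τ > (0:ℝ), q' τ + (a - C * Real.exp (-b * τ)) * q τ ≤
      C * Real.exp (-b * τ) * (1 + ∫ σ in (0:ℝ)..τ, q σ))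
    :
    ∃ Λ > (0:ℝ), ∀ τ ≥ (0:ℝ), q τ ≤ 2 * q₀ * Real.exp (Λ * τ) := by
  set Λ := max (C + q₀) (C / q₀) with hΛdef
  have hΛpos : 0 < Λ := lt_of_lt_of_le (by positivity : (0:ℝ) < C + q₀) (le_max_left _ _)
  refine ⟨Λ, hΛpos, ?_⟩
  intro τ hτ
  set F : ℝ → ℝ := fun t => ∫ σ in (0:ℝ)..t, q σ with hF
  set Q : ℝ → ℝ := fun t => q t + q₀ * (1 + F t) with hQ
  have hint : ∀ t ≥ (0:ℝ), IntervalIntegrable q MeasureTheory.volume 0 t := fun t ht =>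
    (hqc.mono (by rw [uIcc_of_le ht]; exact Icc_subset_Ici_self)).intervalIntegrable
  have hFnonneg : ∀ t ≥ (0:ℝ), 0 ≤ F t := fun t ht =>
    intervalIntegral.integral_nonneg ht (fun u hu => (hqpos u hu.1).le)
  -- derivative of F on (0, ∞)
  have hFd : ∀ t > (0:ℝ), HasDerivAt F (q t) t := by
    intro t ht
    have hct : ContinuousAt q t := hqc.continuousAt (Ici_mem_nhds ht)
    exact intervalIntegral.integral_hasDerivAt_right (hint t ht.le)
      ((hqc.mono Ioi_subset_Ici_self).stronglyMeasurableAtFilter isOpen_Ioi t ht) hct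
  -- key differential inequality for Q
  have hkey : ∀ x > (0:ℝ), q' x + q₀ * q x ≤ Λ * Q x := by
    intro x hx
    have h1 := hineq x hx
    have he : Real.exp (-b * x) ≤ 1 := by
      rw [Real.exp_le_one_iff]; nlinarith
    have hqx := hqpos x hx.le
    have hFx := hFnonneg x hx.le
    have hep := Real.exp_pos (-b * x)
    have hFeq : (∫ σ in (0:ℝ)..x, q σ) = F x := rfl
    rw [hFeq] at h1
    have h2 : q' x ≤ C * q x + C * (1 + F x) := by
      nlinarith [mul_pos hC hqx, mul_nonneg hC.le hFx, mul_pos ha hqx,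
        mul_pos (mul_pos hC hep) hqx]
    have h3 : C + q₀ ≤ Λ := le_max_left _ _
    have h4 : C / q₀ ≤ Λ := le_max_right _ _
    have h5 : C * (1 + F x) = (C / q₀) * (q₀ * (1 + F x)) := by
      field_simp
    have h6 : (C / q₀) * (q₀ * (1 + F x)) ≤ Λ * (q₀ * (1 + F x)) := by
      have : (0:ℝ) ≤ q₀ * (1 + F x) := by positivity
      exact mul_le_mul_of_nonneg_right h4 this
    simp only [hQ]
    nlinarith [mul_le_mul_of_nonneg_right h3 hqx.le]
  rcases eq_or_lt_of_le hτ with rfl | hτpos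
  · simp only [hq0, mul_zero, Real.exp_zero, mul_one]
    nlinarith
  -- auxiliary function g = Q * exp(-Λ t)
  set g : ℝ → ℝ := fun t => Q t * Real.exp (-Λ * t) with hg
  have hQc : ContinuousOn Q (Icc 0 τ) := by
    have h1 : ContinuousOn q (Icc 0 τ) := hqc.mono Icc_subset_Ici_self
    have h2 : ContinuousOn F (Icc 0 τ) := by
      have := intervalIntegral.continuousOn_primitive_interval
        (μ := MeasureTheory.volume) (f := q) (a := 0) (b := τ)
        (by
          rw [uIcc_of_le hτ]
          exact (hqc.mono Icc_subset_Ici_self).integrableOn_Icc)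
      rwa [uIcc_of_le hτ] at this
    exact h1.add (continuousOn_const.mul (continuousOn_const.add h2))
  have hgc : ContinuousOn g (Icc 0 τ) :=
    hQc.mul ((Real.continuous_exp.comp (continuous_const.mul continuous_id)).continuousOn)
  have hgd : ∀ x ∈ Ioo (0:ℝ) τ, HasDerivAt g
      ((q' x + q₀ * q x - Λ * Q x) * Real.exp (-Λ * x)) x := by
    intro x hx
    have hQd : HasDerivAt Q (q' x + q₀ * q x) x := by
      have h1 := hderiv x hx.1
      have h2 := hFd x hx.1
      have : HasDerivAt (fun t => q t + q₀ * (1 + F t)) (q' x + q₀ * (0 + q x)) x :=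
        h1.add ((hasDerivAt_const x (1:ℝ)).add h2 |>.const_mul q₀)
      simpa using this
    have hed : HasDerivAt (fun t => Real.exp (-Λ * t)) (-Λ * Real.exp (-Λ * x)) x := by
      have h : HasDerivAt (fun t : ℝ => -Λ * t) (-Λ) x := by
        simpa using (hasDerivAt_id x).const_mul (-Λ)
      simpa [mul_comm] using h.exp
    have : HasDerivAt g ((q' x + q₀ * q x) * Real.exp (-Λ * x) + Q x * (-Λ * Real.exp (-Λ * x))) x :=
      hQd.mul hed
    convert this using 1
    ring
  have hanti : AntitoneOn g (Icc 0 τ) := by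
    apply antitoneOn_of_deriv_nonpos (convex_Icc 0 τ) hgc
    · intro x hx
      rw [interior_Icc] at hx
      exact (hgd x hx).differentiableAt.differentiableWithinAt
    · intro x hx
      rw [interior_Icc] at hx
      rw [(hgd x hx).deriv]
      apply mul_nonpos_of_nonpos_of_nonneg _ (Real.exp_pos _).le
      have := hkey x hx.1
      linarith
  have hg0 : g 0 = 2 * q₀ := by
    simp [hg, hQ, hF, hq0]
    ring
  have hgτ : g τ ≤ 2 * q₀ := by
    rw [← hg0]
    exact hanti (left_mem_Icc.mpr hτ) (right_mem_Icc.mpr hτ) hτ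
  have hQτ : Q τ ≤ 2 * q₀ * Real.exp (Λ * τ) := by
    have hep : (0:ℝ) < Real.exp (-Λ * τ) := Real.exp_pos _
    have h2 : Real.exp (-Λ * τ) * Real.exp (Λ * τ) = 1 := by
      rw [← Real.exp_add]; simp
    simp only [hg] at hgτ
    have h3 := mul_le_mul_of_nonneg_right hgτ (Real.exp_pos (Λ * τ)).le
    rwa [mul_assoc, h2, mul_one] at h3
  have : q τ ≤ Q τ := by
    have := hFnonneg τ hτ
    simp only [hQ]
    nlinarith
  linarith
end

section
/- There exists a constant K > 0, depending only on a, b, C and q₀, such that q(τ) ≤ K for all τ ≥ 0 (i.e. q is globally bounded). -/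
open Real Set Filter intervalIntegral

theorem stmt_11
    (a b C q₀ : ℝ) (ha : 0 < a) (hb : 0 < b) (hC : 0 < C) (hq₀ : 0 < q₀)
    (q q' : ℝ → ℝ) (hq0 : q 0 = q₀)
    (hqc : ContinuousOn q (Set.Ici 0))
    (hq'c : ContinuousOn q' (Set.Ici 0))
    (hderiv : ∀ τ > (0:ℝ), HasDerivAt q (q' τ) τ)
    (hqpos : ∀ τ ≥ (0:ℝ), 0 < q τ)
    (hineq : ∀ τ > (0:ℝ), q' τ + (a - C * Real.exp (-b * τ)) * q τ ≤
      C * Real.exp (-b * τ) * (1 + ∫ σ in (0:ℝ)..τ, q σ))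
    :
    ∃ K > (0:ℝ), ∀ τ ≥ (0:ℝ), q τ ≤ K := by
  set ε : ℝ := min a 1 with hεdef
  have hε0 : 0 < ε := lt_min ha one_pos
  have hε1 : ε ≤ 1 := min_le_right a 1
  have hεa : ε ≤ a := min_le_left a 1
  set C' : ℝ := C / ε with hC'def
  have hC'0 : 0 < C' := div_pos hC hε0
  have hCε : C' * ε = C := div_mul_cancel₀ C hε0.ne'
  set Q : ℝ → ℝ := fun τ => 1 + ∫ σ in (0:ℝ)..τ, q σ with hQdef
  have hsub : ∀ τ : ℝ, 0 ≤ τ → Set.uIcc (0:ℝ) τ ⊆ Set.Ici 0 := by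
    intro τ hτ; rw [Set.uIcc_of_le hτ]; exact Set.Icc_subset_Ici_self
  have hQint : ∀ τ : ℝ, 0 ≤ τ → IntervalIntegrable q MeasureTheory.volume 0 τ :=
    fun τ hτ => (hqc.mono (hsub τ hτ)).intervalIntegrable
  have hQ1 : ∀ τ : ℝ, 0 ≤ τ → 1 ≤ Q τ := by
    intro τ hτ
    have h0 : 0 ≤ ∫ σ in (0:ℝ)..τ, q σ :=
      intervalIntegral.integral_nonneg hτ (fun u hu => (hqpos u hu.1).le)
    simp only [hQdef]; linarith
  have hQd : ∀ τ : ℝ, 0 < τ → HasDerivAt Q (q τ) τ := by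
    intro τ hτ
    have hca : ContinuousAt q τ := hqc.continuousAt (Ici_mem_nhds hτ)
    have hmeas : StronglyMeasurableAtFilter q (nhds τ) MeasureTheory.volume :=
      (hqc.mono (Set.Ioi_subset_Ici le_rfl)).stronglyMeasurableAtFilter isOpen_Ioi τ hτ
    have h := intervalIntegral.integral_hasDerivAt_right (hQint τ hτ.le) hmeas hca
    have h' := (hasDerivAt_const τ (1:ℝ)).add h
    rw [zero_add] at h'
    exact h'
  have hQc : ContinuousOn Q (Set.Ici 0) := by
    intro τ hτ
    have hint : IntervalIntegrable q MeasureTheory.volume 0 (τ + 1) :=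
      hQint (τ + 1) (by simp at hτ; linarith)
    have h1 : ContinuousOn (fun t => ∫ σ in (0:ℝ)..t, q σ) (Set.uIcc (0:ℝ) (τ+1)) :=
      intervalIntegral.continuousOn_primitive_interval' hint Set.left_mem_uIcc
    have hτ0 : (0:ℝ) ≤ τ := hτ
    have h2 : ContinuousWithinAt (fun t => ∫ σ in (0:ℝ)..t, q σ) (Set.Icc 0 (τ+1)) τ := by
      have := h1 τ (by rw [Set.uIcc_of_le (by linarith)]; exact ⟨hτ0, by linarith⟩)
      rwa [Set.uIcc_of_le (by linarith : (0:ℝ) ≤ τ + 1)] at this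
    have hmem : Set.Icc (0:ℝ) (τ+1) ∈ nhdsWithin τ (Set.Ici 0) := by
      rw [← Set.Ici_inter_Iic]
      exact Filter.inter_mem self_mem_nhdsWithin
        (mem_nhdsWithin_of_mem_nhds (Iic_mem_nhds (by linarith)))
    have h3 : ContinuousWithinAt (fun t => ∫ σ in (0:ℝ)..t, q σ) (Set.Ici 0) τ :=
      h2.mono_of_mem_nhdsWithin hmem
    exact (continuousWithinAt_const.add h3 : ContinuousWithinAt Q (Set.Ici 0) τ)
  set v : ℝ → ℝ := fun τ => q τ + ε * Q τ with hvdef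
  set g : ℝ → ℝ := fun τ => (C'/b) * (1 - Real.exp (-b * τ)) with hgdef
  set w : ℝ → ℝ := fun τ => v τ * Real.exp (-(g τ)) with hwdef
  have hg' : ∀ τ : ℝ, HasDerivAt g (C' * Real.exp (-b * τ)) τ := by
    intro τ
    have h1 : HasDerivAt (fun x : ℝ => -b * x) (-b) τ := by
      simpa using (hasDerivAt_id τ).const_mul (-b)
    have h2 := ((hasDerivAt_const τ (1:ℝ)).sub h1.exp).const_mul (C'/b)
    refine h2.congr_deriv ?_
    rw [div_mul_eq_mul_div, div_eq_iff hb.ne']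
    ring
  have hv' : ∀ τ : ℝ, 0 < τ → HasDerivAt v (q' τ + ε * q τ) τ :=
    fun τ hτ => (hderiv τ hτ).add ((hQd τ hτ).const_mul ε)
  have hw' : ∀ τ : ℝ, 0 < τ →
      HasDerivAt w ((q' τ + ε * q τ - C' * Real.exp (-b * τ) * v τ) * Real.exp (-(g τ))) τ := by
    intro τ hτ
    have he := ((hg' τ).neg).exp
    have h := (hv' τ hτ).mul he
    refine h.congr_deriv ?_
    simp only [Pi.neg_apply]
    ring
  have hkey : ∀ τ : ℝ, 0 < τ → q' τ + ε * q τ ≤ C' * Real.exp (-b * τ) * v τ := by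
    intro τ hτ
    have h := hineq τ hτ
    have hq := hqpos τ hτ.le
    have hQ := hQ1 τ hτ.le
    have he : 0 < Real.exp (-b * τ) := Real.exp_pos _
    have hQint' : Q τ = 1 + ∫ σ in (0:ℝ)..τ, q σ := rfl
    rw [← hQint'] at h
    have hv : v τ = q τ + ε * Q τ := rfl
    rw [hv]
    have hCC' : C ≤ C' := by
      rw [hC'def, le_div_iff₀ hε0]; nlinarith
    have h4 : C * Real.exp (-b * τ) * q τ ≤ C' * Real.exp (-b * τ) * q τ :=
      mul_le_mul_of_nonneg_right (mul_le_mul_of_nonneg_right hCC' he.le) hq.le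
    have h5 : C * Real.exp (-b * τ) * Q τ = C' * Real.exp (-b * τ) * (ε * Q τ) := by
      rw [← hCε]; ring
    have h6 : 0 ≤ (a - ε) * q τ := mul_nonneg (by linarith) hq.le
    nlinarith [h, h4, h5, h6]
  have hvc : ContinuousOn v (Set.Ici 0) := hqc.add (continuousOn_const.mul hQc)
  have hgc : Continuous fun τ => -(g τ) := by
    simp only [hgdef]
    exact (continuous_const.mul (continuous_const.sub
      (Real.continuous_exp.comp (continuous_const.mul continuous_id)))).neg
  have hwc : ContinuousOn w (Set.Ici 0) :=
    hvc.mul (Real.continuous_exp.comp hgc).continuousOn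
  have hwa : AntitoneOn w (Set.Ici 0) := by
    apply antitoneOn_of_deriv_nonpos (convex_Ici 0) hwc
    · rw [interior_Ici]
      exact fun x hx => ((hw' x hx).differentiableAt).differentiableWithinAt
    · rw [interior_Ici]
      intro x hx
      rw [(hw' x hx).deriv]
      exact mul_nonpos_of_nonpos_of_nonneg (by linarith [hkey x hx]) (Real.exp_pos _).le
  have hw0 : w 0 = q₀ + ε := by
    simp only [hwdef, hvdef, hgdef, hQdef]
    simp [hq0, intervalIntegral.integral_same]
  refine ⟨(q₀ + ε) * Real.exp (C'/b), by positivity, ?_⟩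
  intro τ hτ
  have h1 : w τ ≤ w 0 := hwa Set.self_mem_Ici hτ hτ
  rw [hw0] at h1
  have hgle : g τ ≤ C'/b := by
    have he : 0 < Real.exp (-b * τ) := Real.exp_pos _
    have : 1 - Real.exp (-b * τ) ≤ 1 := by linarith
    calc g τ = (C'/b) * (1 - Real.exp (-b * τ)) := rfl
      _ ≤ (C'/b) * 1 := by
          apply mul_le_mul_of_nonneg_left this (by positivity)
      _ = C'/b := mul_one _
  have hvle : v τ ≤ (q₀ + ε) * Real.exp (g τ) := by
    have h2 : v τ * Real.exp (-(g τ)) ≤ q₀ + ε := h1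
    have h3 := mul_le_mul_of_nonneg_right h2 (Real.exp_pos (g τ)).le
    rwa [mul_assoc, ← Real.exp_add, neg_add_cancel, Real.exp_zero, mul_one] at h3
  have hQ := hQ1 τ hτ
  have hvq : q τ ≤ v τ := by
    have : 0 ≤ ε * Q τ := by positivity
    simp only [hvdef]; linarith
  calc q τ ≤ v τ := hvq
    _ ≤ (q₀ + ε) * Real.exp (g τ) := hvle
    _ ≤ (q₀ + ε) * Real.exp (C'/b) := by
        apply mul_le_mul_of_nonneg_left (Real.exp_le_exp.2 hgle) (by positivity)
end

section
/- The system q'(τ) = −q(τ) + C ζ(τ) e^{−βτ}, ζ'(τ) = C (q(τ) + ζ(τ) e^{−βτ}), with q(0) = q₀ and ζ(0) = ζ₀, has a unique solution (q, ζ) defined on all of [0,∞); moreover q(τ) > 0 and ζ(τ) > 0 for all τ ≥ 0, ζ is nondecreasing and bounded above, and there exist constants K > 0 and μ > 0 such that q(τ) ≤ K e^{−μτ} for all τ ≥ 0. -/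
open Real Set Filter

namespace Stmt13Aux

variable {C β : ℝ}

/-- time coefficient, truncated for negative times -/
noncomputable def gg (β t : ℝ) : ℝ := Real.exp (-β * max t 0)

lemma gg_pos (β t : ℝ) : 0 < gg β t := Real.exp_pos _

lemma gg_le_one (hβ : 0 < β) (t : ℝ) : gg β t ≤ 1 := by
  unfold gg
  rw [← Real.exp_zero]
  apply Real.exp_le_exp.2
  have : 0 ≤ max t 0 := le_max_right _ _
  nlinarith

lemma gg_of_nonneg (hβ : 0 < β) {t : ℝ} (ht : 0 ≤ t) : gg β t = Real.exp (-β * t) := by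
  unfold gg; rw [max_eq_left ht]

lemma continuous_gg (β : ℝ) : Continuous (gg β) := by
  unfold gg; continuity

/-- the vector field -/
noncomputable def vf (C β : ℝ) (t : ℝ) (x : ℝ × ℝ) : ℝ × ℝ :=
  (-x.1 + C * x.2 * gg β t, C * (x.1 + x.2 * gg β t))

noncomputable def LL (C : ℝ) : NNReal := Real.toNNReal (1 + 2 * C)

lemma LL_coe (hC : 0 < C) : (LL C : ℝ) = 1 + 2 * C := by
  simp only [LL]; rw [Real.coe_toNNReal]; linarith

lemma LL_pos (hC : 0 < C) : (0:ℝ) < LL C := by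
  rw [LL_coe hC]; linarith

lemma lip (hC : 0 < C) (hβ : 0 < β) (t : ℝ) : LipschitzWith (LL C) (vf C β t) := by
  apply LipschitzWith.of_dist_le_mul
  intro x y
  have hd : dist x y = max (dist x.1 y.1) (dist x.2 y.2) := Prod.dist_eq
  have h1 : dist x.1 y.1 ≤ dist x y := by rw [hd]; exact le_max_left _ _
  have h2 : dist x.2 y.2 ≤ dist x y := by rw [hd]; exact le_max_right _ _
  rw [Real.dist_eq] at h1 h2
  have hg0 : 0 < gg β t := gg_pos β t
  have hg1 : gg β t ≤ 1 := gg_le_one hβ t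
  have hD : 0 ≤ dist x y := dist_nonneg
  rw [Prod.dist_eq]
  apply max_le
  · rw [Real.dist_eq]
    simp only [vf]
    have : -x.1 + C * x.2 * gg β t - (-y.1 + C * y.2 * gg β t)
        = -(x.1 - y.1) + C * gg β t * (x.2 - y.2) := by ring
    rw [this]
    calc |(-(x.1 - y.1)) + C * gg β t * (x.2 - y.2)|
        ≤ |(-(x.1 - y.1))| + |C * gg β t * (x.2 - y.2)| := abs_add_le _ _
      _ = |x.1 - y.1| + C * gg β t * |x.2 - y.2| := by
          rw [abs_neg, abs_mul, abs_of_pos (by positivity : (0:ℝ) < C * gg β t)]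
      _ ≤ dist x y + C * 1 * dist x y := by
          have key : gg β t * |x.2 - y.2| ≤ 1 * dist x y :=
            mul_le_mul hg1 h2 (abs_nonneg _) zero_le_one
          nlinarith
      _ ≤ (LL C : ℝ) * dist x y := by
          rw [LL_coe hC]; nlinarith
  · rw [Real.dist_eq]
    simp only [vf]
    have : C * (x.1 + x.2 * gg β t) - C * (y.1 + y.2 * gg β t)
        = C * (x.1 - y.1) + C * gg β t * (x.2 - y.2) := by ring
    rw [this]
    calc |C * (x.1 - y.1) + C * gg β t * (x.2 - y.2)|
        ≤ |C * (x.1 - y.1)| + |C * gg β t * (x.2 - y.2)| := abs_add_le _ _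
      _ = C * |x.1 - y.1| + C * gg β t * |x.2 - y.2| := by
          rw [abs_mul, abs_mul, abs_of_pos hC, abs_of_pos (by positivity : (0:ℝ) < C * gg β t)]
      _ ≤ C * dist x y + C * 1 * dist x y := by
          have key : gg β t * |x.2 - y.2| ≤ 1 * dist x y :=
            mul_le_mul hg1 h2 (abs_nonneg _) zero_le_one
          nlinarith
      _ ≤ (LL C : ℝ) * dist x y := by
          rw [LL_coe hC]; nlinarith

lemma vf_zero (t : ℝ) : vf C β t 0 = 0 := by simp [vf]

lemma vf_norm_le (hC : 0 < C) (hβ : 0 < β) (t : ℝ) (x : ℝ × ℝ) :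
    ‖vf C β t x‖ ≤ (LL C : ℝ) * ‖x‖ := by
  have := (lip hC hβ t).dist_le_mul x 0
  rwa [vf_zero, dist_zero_right, dist_zero_right] at this

/-- uniform step size -/
noncomputable def hstep (C : ℝ) : ℝ := 1 / (2 * (LL C : ℝ))

lemma hstep_pos (hC : 0 < C) : 0 < hstep C := by
  have := LL_pos hC; unfold hstep; positivity

lemma step (hC : 0 < C) (hβ : 0 < β) (a : ℝ) (y : ℝ × ℝ) :
    ∃ f : ℝ → ℝ × ℝ, f a = y ∧ ∀ t ∈ Icc (a - hstep C) (a + hstep C),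
      HasDerivWithinAt f (vf C β t (f t)) (Icc (a - hstep C) (a + hstep C)) t := by
  have hL := LL_pos hC
  have hh := hstep_pos hC
  have hpl : IsPicardLindelof (vf C β) (tmin := a - hstep C) (tmax := a + hstep C)
      ⟨a, by constructor <;> linarith⟩ y (‖y‖₊ + 1) 0 (LL C * (2 * ‖y‖₊ + 1)) (LL C) := by
    constructor
    · intro t _
      exact (lip hC hβ t).lipschitzOnWith
    · intro x _
      apply Continuous.continuousOn
      simp only [vf]
      have := continuous_gg β
      continuity
    · intro t _ x hx
      have hxn : ‖x‖ ≤ 2 * ‖y‖ + 1 := by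
        have hd : dist x y ≤ ‖y‖ + 1 := by
          simpa [Metric.mem_closedBall] using hx
        rw [dist_eq_norm] at hd
        nlinarith [norm_sub_norm_le x y]
      push_cast
      calc ‖vf C β t x‖ ≤ (LL C : ℝ) * ‖x‖ := vf_norm_le hC hβ t x
        _ ≤ (LL C : ℝ) * (2 * ‖y‖ + 1) := by nlinarith
    · have : max (a + hstep C - a) (a - (a - hstep C)) = hstep C := by
        simp
      simp only [this]
      push_cast
      unfold hstep
      have : (LL C : ℝ) * (2 * ‖y‖ + 1) * (1 / (2 * (LL C : ℝ))) = (2*‖y‖+1)/2 := by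
        field_simp
      rw [this]
      nlinarith [norm_nonneg y]
  obtain ⟨f, hf0, hf⟩ := hpl.exists_eq_forall_mem_Icc_hasDerivWithinAt₀
  exact ⟨f, hf0, hf⟩


lemma glue {f₁ f₂ : ℝ → ℝ × ℝ} {a c d : ℝ} (hac : a ≤ c) (hcd : c ≤ d)
    (h₁ : ∀ t ∈ Icc a c, HasDerivWithinAt f₁ (vf C β t (f₁ t)) (Icc a c) t)
    (h₂ : ∀ t ∈ Icc c d, HasDerivWithinAt f₂ (vf C β t (f₂ t)) (Icc c d) t)
    (heq : f₂ c = f₁ c) :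
    ∃ f : ℝ → ℝ × ℝ, (∀ t ∈ Icc a c, f t = f₁ t) ∧
      ∀ t ∈ Icc a d, HasDerivWithinAt f (vf C β t (f t)) (Icc a d) t := by
  set f : ℝ → ℝ × ℝ := fun t => if t ≤ c then f₁ t else f₂ t with hf
  have hfl : ∀ t ∈ Icc a c, f t = f₁ t := fun t ht => if_pos ht.2
  have hfr : ∀ t ∈ Icc c d, f t = f₂ t := by
    intro t ht
    by_cases h : t ≤ c
    · have : t = c := le_antisymm h ht.1
      simp [hf, this, heq]
    · simp [hf, h]
  refine ⟨f, hfl, fun t ht => ?_⟩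
  have hunion : Icc a c ∪ Icc c d = Icc a d := Icc_union_Icc_eq_Icc hac hcd
  have H1 : HasDerivWithinAt f (vf C β t (f t)) (Icc a c) t := by
    by_cases h : t ∈ Icc a c
    · have e := hfl t h
      have h' := (h₁ t h).congr_of_mem (fun s hs => hfl s hs) h
      rw [e]; exact h'
    · exact HasFDerivWithinAt.of_notMem_closure (by rwa [closure_Icc])
  have H2 : HasDerivWithinAt f (vf C β t (f t)) (Icc c d) t := by
    by_cases h : t ∈ Icc c d
    · have e := hfr t h
      have h' := (h₂ t h).congr_of_mem (fun s hs => hfr s hs) h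
      rw [e]; exact h'
    · exact HasFDerivWithinAt.of_notMem_closure (by rwa [closure_Icc])
  have := H1.union H2
  rwa [hunion] at this

lemma chain (hC : 0 < C) (hβ : 0 < β) (x₀ : ℝ × ℝ) (n : ℕ) :
    ∃ f : ℝ → ℝ × ℝ, f 0 = x₀ ∧ ∀ t ∈ Icc (-hstep C) ((n + 1) * hstep C),
      HasDerivWithinAt f (vf C β t (f t)) (Icc (-hstep C) ((n + 1) * hstep C)) t := by
  have hh := hstep_pos hC
  induction n with
  | zero =>
    obtain ⟨f, hf0, hf⟩ := step hC hβ 0 x₀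
    refine ⟨f, hf0, ?_⟩
    have h1 : ((0:ℕ) + 1 : ℝ) * hstep C = 0 + hstep C := by push_cast; ring
    have h2 : -hstep C = 0 - hstep C := by ring
    rw [h1, h2]
    exact hf
  | succ n ih =>
    obtain ⟨f, hf0, hf⟩ := ih
    set c : ℝ := (n + 1) * hstep C with hc
    obtain ⟨g, hg0, hg⟩ := step hC hβ c (f c)
    have hsub : Icc c ((n + 2) * hstep C) ⊆ Icc (c - hstep C) (c + hstep C) := by
      apply Icc_subset_Icc
      · linarith
      · rw [hc]; push_cast; ring_nf; rfl
    have hg' : ∀ t ∈ Icc c ((n + 2) * hstep C),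
        HasDerivWithinAt g (vf C β t (g t)) (Icc c ((n + 2) * hstep C)) t :=
      fun t ht => (hg t (hsub ht)).mono hsub
    have hac : -hstep C ≤ c := by
      rw [hc]; push_cast
      nlinarith [hh.le, Nat.cast_nonneg (α := ℝ) n]
    have hcd : c ≤ (n + 2) * hstep C := by
      rw [hc]; push_cast; nlinarith
    obtain ⟨F, hFl, hF⟩ := glue hac hcd hf hg' hg0
    refine ⟨F, ?_, ?_⟩
    · rw [hFl 0 ⟨by linarith, by rw [hc]; push_cast; positivity⟩, hf0]
    · have : ((n:ℝ) + 1 + 1) * hstep C = ((n:ℝ) + 2) * hstep C := by ring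
      push_cast
      rw [this]
      exact hF


lemma global_sol (hC : 0 < C) (hβ : 0 < β) (x₀ : ℝ × ℝ) :
    ∃ f : ℝ → ℝ × ℝ, f 0 = x₀ ∧
      ∀ t : ℝ, -hstep C < t → HasDerivAt f (vf C β t (f t)) t := by
  have hh := hstep_pos hC
  choose G hG0 hG using chain hC hβ x₀
  have hv : ∀ t, LipschitzOnWith (LL C) (vf C β t) univ :=
    fun t => (lip hC hβ t).lipschitzOnWith
  have hcons : ∀ n m : ℕ, n ≤ m →
      EqOn (G n) (G m) (Icc (-hstep C) ((n + 1) * hstep C)) := by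
    intro n m hnm
    have hb : ((n:ℝ) + 1) * hstep C ≤ ((m:ℝ) + 1) * hstep C := by
      have : (n:ℝ) ≤ m := Nat.cast_le.2 hnm
      nlinarith
    have hbpos : (0:ℝ) < ((n:ℝ) + 1) * hstep C := by positivity
    have hsub : Icc (-hstep C) (((n:ℝ) + 1) * hstep C)
        ⊆ Icc (-hstep C) (((m:ℝ) + 1) * hstep C) := Icc_subset_Icc le_rfl hb
    apply ODE_solution_unique_of_mem_Icc (s := fun _ => univ) (fun t _ => hv t)
      (show (0:ℝ) ∈ Ioo (-hstep C) (((n:ℝ)+1) * hstep C) from ⟨by linarith, hbpos⟩)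
    · exact fun t ht => (hG n t ht).continuousWithinAt
    · exact fun t ht => (hG n t (Ioo_subset_Icc_self ht)).hasDerivAt
        (Icc_mem_nhds ht.1 ht.2)
    · exact fun t _ => mem_univ _
    · exact fun t ht => ((hG m t (hsub ht)).continuousWithinAt).mono hsub
    · intro t ht
      exact (hG m t (hsub (Ioo_subset_Icc_self ht))).hasDerivAt
        (Icc_mem_nhds ht.1 (lt_of_lt_of_le ht.2 hb))
    · exact fun t _ => mem_univ _
    · rw [hG0 n, hG0 m]
  set f : ℝ → ℝ × ℝ := fun t => G (Nat.ceil (t / hstep C) + 1) t with hfdef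
  have hmem : ∀ t : ℝ, -hstep C < t →
      t ∈ Ioo (-hstep C) (((Nat.ceil (t / hstep C) + 1 : ℕ) + 1 : ℝ) * hstep C) := by
    intro t ht
    refine ⟨ht, ?_⟩
    rcases le_or_gt t 0 with h0 | h0
    · have : (0:ℝ) < (((Nat.ceil (t / hstep C) + 1 : ℕ) : ℝ) + 1) * hstep C := by positivity
      linarith
    · have h1 : t / hstep C ≤ (Nat.ceil (t / hstep C) : ℝ) := Nat.le_ceil _
      have h2 : t ≤ (Nat.ceil (t / hstep C) : ℝ) * hstep C := by
        rw [div_le_iff₀ hh] at h1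
        linarith
      have h3 : ((Nat.ceil (t / hstep C) : ℝ)) * hstep C
          < (((Nat.ceil (t / hstep C) + 1 : ℕ) : ℝ) + 1) * hstep C := by
        push_cast
        nlinarith
      linarith
  have feq : ∀ n : ℕ, EqOn f (G n) (Icc (-hstep C) (((n:ℝ) + 1) * hstep C)) := by
    intro n s hs
    set m : ℕ := Nat.ceil (s / hstep C) + 1 with hm
    have hsm : s ∈ Icc (-hstep C) (((m:ℝ) + 1) * hstep C) := by
      rcases lt_or_ge (-hstep C) s with h | h
      · exact Ioo_subset_Icc_self (hmem s h)
      · have : s = -hstep C := le_antisymm h hs.1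
        constructor
        · linarith
        · have : (0:ℝ) < ((m:ℝ) + 1) * hstep C := by positivity
          linarith
      
    rcases le_total n m with hle | hle
    · exact (hcons n m hle hs).symm
    · exact hcons m n hle hsm
  refine ⟨f, ?_, ?_⟩
  · show G (Nat.ceil ((0:ℝ) / hstep C) + 1) 0 = x₀
    exact hG0 _
  · intro t ht
    set n : ℕ := Nat.ceil (t / hstep C) + 1 with hn
    have hto := hmem t ht
    have hd : HasDerivAt (G n) (vf C β t (G n t)) t :=
      (hG n t (Ioo_subset_Icc_self hto)).hasDerivAt (Icc_mem_nhds hto.1 hto.2)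
    have hev : f =ᶠ[nhds t] G n :=
      Filter.eventuallyEq_of_mem (Ioo_mem_nhds hto.1 hto.2)
        (fun s hs => feq n (Ioo_subset_Icc_self hs))
    have h2 := hd.congr_of_eventuallyEq hev
    rwa [← feq n (Ioo_subset_Icc_self hto)] at h2


lemma monoOn_Icc_of_hasDerivAt {f g : ℝ → ℝ} {a b : ℝ}
    (hd : ∀ t ∈ Icc a b, HasDerivAt f (g t) t) (h0 : ∀ t ∈ Ioo a b, 0 ≤ g t) :
    MonotoneOn f (Icc a b) := by
  apply monotoneOn_of_deriv_nonneg (convex_Icc a b)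
  · exact fun t ht => (hd t ht).continuousAt.continuousWithinAt
  · rw [interior_Icc]
    exact fun t ht =>
      ((hd t (Ioo_subset_Icc_self ht)).differentiableAt).differentiableWithinAt
  · rw [interior_Icc]
    intro t ht
    rw [(hd t (Ioo_subset_Icc_self ht)).deriv]
    exact h0 t ht

section Analysis

variable {q₀ ζ₀ : ℝ} {q ζ : ℝ → ℝ}

lemma hasDerivAt_neg_beta_exp (hβ : 0 < β) (τ : ℝ) :
    HasDerivAt (fun s => Real.exp (-β * s)) (-β * Real.exp (-β * τ)) τ := by
  have h1 : HasDerivAt (fun s : ℝ => -β * s) (-β) τ := by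
    simpa using (hasDerivAt_id τ).const_mul (-β)
  have := h1.exp
  convert this using 1
  ring

lemma positivity_lemma (hC : 0 < C) (hβ : 0 < β)
    (hq₀ : 0 < q₀) (hζ₀ : 0 < ζ₀) (h0q : q 0 = q₀) (h0ζ : ζ 0 = ζ₀)
    (hder : ∀ τ ≥ (0:ℝ), HasDerivAt q (-q τ + C * ζ τ * Real.exp (-β * τ)) τ ∧
      HasDerivAt ζ (C * (q τ + ζ τ * Real.exp (-β * τ))) τ) :
    ∀ τ ≥ (0:ℝ), 0 < q τ ∧ 0 < ζ τ := by
  by_contra hcon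
  push_neg at hcon
  obtain ⟨τ₀, hτ₀, hbad⟩ := hcon
  set B : Set ℝ := {τ | 0 ≤ τ ∧ (q τ ≤ 0 ∨ ζ τ ≤ 0)} with hB
  have hne : B.Nonempty := by
    refine ⟨τ₀, hτ₀, ?_⟩
    rcases lt_or_ge 0 (q τ₀) with h | h
    · exact Or.inr (by linarith [hbad h])
    · exact Or.inl h
  have hbdd : BddBelow B := ⟨0, fun b hb => hb.1⟩
  set T := sInf B with hT
  have hT0 : 0 ≤ T := le_csInf hne fun b hb => hb.1
  have hTmem : q T ≤ 0 ∨ ζ T ≤ 0 := by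
    by_contra hpos
    push_neg at hpos
    have hq1 : ∀ᶠ s in nhds T, 0 < q s :=
      ((hder T hT0).1.continuousAt).eventually (eventually_gt_nhds hpos.1)
    have hq2 : ∀ᶠ s in nhds T, 0 < ζ s :=
      ((hder T hT0).2.continuousAt).eventually (eventually_gt_nhds hpos.2)
    obtain ⟨ε, hε, hball⟩ := Metric.eventually_nhds_iff.mp (hq1.and hq2)
    obtain ⟨b, hbB, hb⟩ := Real.lt_sInf_add_pos hne hε
    have hTb : T ≤ b := csInf_le hbdd hbB
    have hdist : dist b T < ε := by
      rw [Real.dist_eq, abs_of_nonneg (by linarith)]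
      rw [← hT] at hb
      linarith
    have := hball hdist
    rcases hbB.2 with h | h
    · linarith [this.1]
    · linarith [this.2]
  have hTpos : 0 < T := by
    rcases eq_or_lt_of_le hT0 with h | h
    · exfalso
      rw [← h] at hTmem
      rcases hTmem with h' | h' <;> simp [h0q, h0ζ] at h' <;> linarith
    · exact h
  have hlt : ∀ s, 0 ≤ s → s < T → 0 < q s ∧ 0 < ζ s := by
    intro s hs0 hsT
    by_contra h
    push_neg at h
    have hsB : s ∈ B := by
      refine ⟨hs0, ?_⟩
      rcases lt_or_ge 0 (q s) with h' | h'
      · exact Or.inr (by linarith [h h'])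
      · exact Or.inl h'
    exact absurd (csInf_le hbdd hsB) (by rw [← hT]; linarith)
  -- ζ T > 0 via monotonicity
  have hζT : 0 < ζ T := by
    have hmono : MonotoneOn ζ (Icc 0 T) := by
      apply monoOn_Icc_of_hasDerivAt (g := fun t => C * (q t + ζ t * Real.exp (-β * t)))
      · exact fun t ht => (hder t ht.1).2
      · intro t ht
        obtain ⟨hq, hζ⟩ := hlt t ht.1.le ht.2
        positivity
    have := hmono (left_mem_Icc.2 hT0) (right_mem_Icc.2 hT0) hT0
    rw [h0ζ] at this
    linarith
  -- q T > 0 via q·exp increasing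
  have hqT : 0 < q T := by
    have hmono : MonotoneOn (fun τ => q τ * Real.exp τ) (Icc 0 T) := by
      apply monoOn_Icc_of_hasDerivAt
        (g := fun t => (-q t + C * ζ t * Real.exp (-β * t)) * Real.exp t + q t * Real.exp t)
      · intro t ht
        exact ((hder t ht.1).1).mul (Real.hasDerivAt_exp t)
      · intro t ht
        obtain ⟨hq, hζ⟩ := hlt t ht.1.le ht.2
        have : (-q t + C * ζ t * Real.exp (-β * t)) * Real.exp t + q t * Real.exp t
            = C * ζ t * Real.exp (-β * t) * Real.exp t := by ring
        rw [this]
        positivity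
    have h2 := hmono (left_mem_Icc.2 hT0) (right_mem_Icc.2 hT0) hT0
    simp only [h0q, Real.exp_zero, mul_one] at h2
    nlinarith [Real.exp_pos T]
  rcases hTmem with h | h <;> linarith

lemma zeta_mono (hC : 0 < C) (hβ : 0 < β)
    (hpos : ∀ τ ≥ (0:ℝ), 0 < q τ ∧ 0 < ζ τ)
    (hder : ∀ τ ≥ (0:ℝ), HasDerivAt q (-q τ + C * ζ τ * Real.exp (-β * τ)) τ ∧
      HasDerivAt ζ (C * (q τ + ζ τ * Real.exp (-β * τ))) τ) :
    MonotoneOn ζ (Ici (0:ℝ)) := by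
  intro x hx y hy hxy
  have hmono : MonotoneOn ζ (Icc x y) := by
    apply monoOn_Icc_of_hasDerivAt (g := fun t => C * (q t + ζ t * Real.exp (-β * t)))
    · exact fun t ht => (hder t (le_trans hx ht.1)).2
    · intro t ht
      obtain ⟨hq, hζ⟩ := hpos t (le_trans hx ht.1.le)
      positivity
  exact hmono (left_mem_Icc.2 hxy) (right_mem_Icc.2 hxy) hxy

lemma zeta_bound (hC : 0 < C) (hβ : 0 < β)
    (hq₀ : 0 < q₀) (hζ₀ : 0 < ζ₀) (h0q : q 0 = q₀) (h0ζ : ζ 0 = ζ₀)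
    (hder : ∀ τ ≥ (0:ℝ), HasDerivAt q (-q τ + C * ζ τ * Real.exp (-β * τ)) τ ∧
      HasDerivAt ζ (C * (q τ + ζ τ * Real.exp (-β * τ))) τ)
    (hpos : ∀ τ ≥ (0:ℝ), 0 < q τ ∧ 0 < ζ τ) :
    ∀ τ ≥ (0:ℝ), ζ τ ≤ (ζ₀ + C * q₀) * Real.exp (C * (1 + C) / β) := by
  intro τ hτ
  set c : ℝ := C * (1 + C) / β with hc
  have hcpos : 0 < c := by rw [hc]; positivity
  set Φ : ℝ → ℝ := fun s => c * (1 - Real.exp (-β * s)) with hΦdef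
  set D : ℝ → ℝ := fun s => (ζ s + C * q s) * Real.exp (-Φ s) with hDdef
  have hΦd : ∀ s : ℝ, HasDerivAt Φ (c * (β * Real.exp (-β * s))) s := by
    intro s
    have h1 := (hasDerivAt_neg_beta_exp hβ s).const_sub 1
    have h2 := h1.const_mul c
    exact h2.congr_deriv (by ring)
  have hDd : ∀ s ≥ (0:ℝ), HasDerivAt D
      ((C * (q s + ζ s * Real.exp (-β * s)) + C * (-q s + C * ζ s * Real.exp (-β * s)))
        * Real.exp (-Φ s)
        + (ζ s + C * q s) * (Real.exp (-Φ s) * -(c * (β * Real.exp (-β * s))))) s := by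
    intro s hs
    have hV : HasDerivAt (fun t => ζ t + C * q t)
        (C * (q s + ζ s * Real.exp (-β * s)) + C * (-q s + C * ζ s * Real.exp (-β * s))) s :=
      ((hder s hs).2).add (((hder s hs).1).const_mul C)
    have hE : HasDerivAt (fun t => Real.exp (-Φ t))
        (Real.exp (-Φ s) * -(c * (β * Real.exp (-β * s)))) s := ((hΦd s).neg).exp
    exact hV.mul hE
  have hmono : MonotoneOn (fun s => -D s) (Icc 0 τ) := by
    apply monoOn_Icc_of_hasDerivAt
      (g := fun s => -((C * (q s + ζ s * Real.exp (-β * s)) + C * (-q s + C * ζ s * Real.exp (-β * s)))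
        * Real.exp (-Φ s)
        + (ζ s + C * q s) * (Real.exp (-Φ s) * -(c * (β * Real.exp (-β * s))))))
    · exact fun t ht => (hDd t ht.1).neg
    · intro s hs
      obtain ⟨hq, hζ⟩ := hpos s hs.1.le
      have hkey : -((C * (q s + ζ s * Real.exp (-β * s)) + C * (-q s + C * ζ s * Real.exp (-β * s)))
          * Real.exp (-Φ s)
          + (ζ s + C * q s) * (Real.exp (-Φ s) * -(c * (β * Real.exp (-β * s)))))
          = Real.exp (-Φ s) * ((c * β - C * (1 + C)) * Real.exp (-β * s) * ζ s
              + c * β * C * Real.exp (-β * s) * q s) := by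
        ring
      have hcβ : c * β = C * (1 + C) := by
        rw [hc]; field_simp
      rw [hkey, hcβ]
      have h1 : (C * (1 + C) - C * (1 + C)) = (0:ℝ) := by ring
      rw [h1]
      have h2 : (0:ℝ) * Real.exp (-β * s) * ζ s = 0 := by ring
      rw [h2, zero_add]
      positivity
  have hDτ : D τ ≤ D 0 := by
    have := hmono (left_mem_Icc.2 hτ) (right_mem_Icc.2 hτ) hτ
    simpa using this
  have hD0 : D 0 = ζ₀ + C * q₀ := by
    simp [hDdef, hΦdef, h0q, h0ζ]
  have hΦτ : Φ τ ≤ c := by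
    have : 0 < Real.exp (-β * τ) := Real.exp_pos _
    simp only [hΦdef]
    nlinarith
  have hemul : Real.exp (-Φ τ) * Real.exp (Φ τ) = 1 := by
    rw [← Real.exp_add]; simp
  have hVτ : ζ τ + C * q τ ≤ (ζ₀ + C * q₀) * Real.exp (Φ τ) := by
    have h2 : D τ * Real.exp (Φ τ) ≤ D 0 * Real.exp (Φ τ) :=
      mul_le_mul_of_nonneg_right hDτ (Real.exp_pos _).le
    rw [hD0] at h2
    have h3 : D τ * Real.exp (Φ τ) = (ζ τ + C * q τ) * (Real.exp (-Φ τ) * Real.exp (Φ τ)) := by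
      simp only [hDdef]; ring
    rw [h3, hemul, mul_one] at h2
    exact h2
  have hexp : Real.exp (Φ τ) ≤ Real.exp c := Real.exp_le_exp.2 hΦτ
  obtain ⟨hq, _⟩ := hpos τ hτ
  have hz : 0 < ζ₀ + C * q₀ := by positivity
  nlinarith [Real.exp_pos (Φ τ)]

lemma q_decay (hC : 0 < C) (hβ : 0 < β) (hβ1 : β < 1)
    (hq₀ : 0 < q₀) (h0q : q 0 = q₀)
    (hder : ∀ τ ≥ (0:ℝ), HasDerivAt q (-q τ + C * ζ τ * Real.exp (-β * τ)) τ ∧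
      HasDerivAt ζ (C * (q τ + ζ τ * Real.exp (-β * τ))) τ)
    {M : ℝ} (hM : ∀ τ ≥ (0:ℝ), ζ τ ≤ M) (hMpos : 0 < M) :
    ∀ τ ≥ (0:ℝ), q τ ≤ (q₀ + C * M / (1 - β)) * Real.exp (-β * τ) := by
  intro τ hτ
  have h1β : (0:ℝ) < 1 - β := by linarith
  set a : ℝ := C * M / (1 - β) with ha
  have hapos : 0 < a := by rw [ha]; positivity
  set P : ℝ → ℝ := fun s => q₀ + a * (Real.exp ((1 - β) * s) - 1) - q s * Real.exp s with hP
  have hPd : ∀ s ≥ (0:ℝ), HasDerivAt P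
      (a * ((1 - β) * Real.exp ((1 - β) * s))
        - ((-q s + C * ζ s * Real.exp (-β * s)) * Real.exp s + q s * Real.exp s)) s := by
    intro s hs
    have h1 : HasDerivAt (fun t : ℝ => (1 - β) * t) (1 - β) s := by
      simpa using (hasDerivAt_id s).const_mul (1 - β)
    have h2 : HasDerivAt (fun t => q₀ + a * (Real.exp ((1 - β) * t) - 1))
        (a * ((1 - β) * Real.exp ((1 - β) * s))) s := by
      have h3 := ((h1.exp).sub_const 1).const_mul a
      have h4 := h3.const_add q₀
      exact h4.congr_deriv (by ring)
    have h5 : HasDerivAt (fun t => q t * Real.exp t)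
        ((-q s + C * ζ s * Real.exp (-β * s)) * Real.exp s + q s * Real.exp s) s :=
      ((hder s hs).1).mul (Real.hasDerivAt_exp s)
    exact h2.sub h5
  have hmono : MonotoneOn P (Icc 0 τ) := by
    apply monoOn_Icc_of_hasDerivAt
      (g := fun s => a * ((1 - β) * Real.exp ((1 - β) * s))
        - ((-q s + C * ζ s * Real.exp (-β * s)) * Real.exp s + q s * Real.exp s))
    · exact fun t ht => hPd t ht.1
    · intro s hs
      have hEe : Real.exp (-β * s) * Real.exp s = Real.exp ((1 - β) * s) := by
        rw [← Real.exp_add]; ring_nf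
      have hsimp : a * ((1 - β) * Real.exp ((1 - β) * s))
          - ((-q s + C * ζ s * Real.exp (-β * s)) * Real.exp s + q s * Real.exp s)
          = C * M * Real.exp ((1 - β) * s)
            - C * ζ s * (Real.exp (-β * s) * Real.exp s) := by
        rw [ha]; field_simp; ring
      rw [hsimp, hEe]
      have hζM := hM s hs.1.le
      have hX := Real.exp_pos ((1 - β) * s)
      nlinarith [mul_le_mul_of_nonneg_right hζM hX.le]
  have hP0 : P 0 = 0 := by
    simp [hP, h0q]
  have hPτ : 0 ≤ P τ := by
    have := hmono (left_mem_Icc.2 hτ) (right_mem_Icc.2 hτ) hτ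
    rwa [hP0] at this
  have hX1 : 1 ≤ Real.exp ((1 - β) * τ) := by
    apply Real.one_le_exp
    positivity
  have hq : q τ * Real.exp τ ≤ (q₀ + a) * Real.exp ((1 - β) * τ) := by
    simp only [hP] at hPτ
    nlinarith
  have hfin : Real.exp ((1 - β) * τ) * Real.exp (-τ) = Real.exp (-β * τ) := by
    rw [← Real.exp_add]; ring_nf
  have hqid : q τ = q τ * Real.exp τ * Real.exp (-τ) := by
    rw [mul_assoc, ← Real.exp_add]; simp
  rw [hqid, ha]
  calc q τ * Real.exp τ * Real.exp (-τ)
      ≤ (q₀ + a) * Real.exp ((1 - β) * τ) * Real.exp (-τ) :=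
        mul_le_mul_of_nonneg_right hq (Real.exp_pos _).le
    _ = (q₀ + a) * Real.exp (-β * τ) := by rw [mul_assoc, hfin]
    _ = (q₀ + C * M / (1 - β)) * Real.exp (-β * τ) := by rw [ha]

end Analysis

lemma hasDerivAt_components {F : ℝ → ℝ × ℝ} {d : ℝ × ℝ} {τ : ℝ} (h : HasDerivAt F d τ) :
    HasDerivAt (fun t => (F t).1) d.1 τ ∧ HasDerivAt (fun t => (F t).2) d.2 τ :=
  ⟨(ContinuousLinearMap.fst ℝ ℝ ℝ).hasFDerivAt.comp_hasDerivAt τ h,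
   (ContinuousLinearMap.snd ℝ ℝ ℝ).hasFDerivAt.comp_hasDerivAt τ h⟩

lemma uniqueness (hC : 0 < C) (hβ : 0 < β) {q ζ q₁ ζ₁ : ℝ → ℝ}
    (h00 : q₁ 0 = q 0) (h01 : ζ₁ 0 = ζ 0)
    (hder : ∀ τ ≥ (0:ℝ), HasDerivAt q (-q τ + C * ζ τ * Real.exp (-β * τ)) τ ∧
      HasDerivAt ζ (C * (q τ + ζ τ * Real.exp (-β * τ))) τ)
    (hder₁ : ∀ τ ≥ (0:ℝ), HasDerivAt q₁ (-q₁ τ + C * ζ₁ τ * Real.exp (-β * τ)) τ ∧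
      HasDerivAt ζ₁ (C * (q₁ τ + ζ₁ τ * Real.exp (-β * τ))) τ) :
    ∀ τ ≥ (0:ℝ), q₁ τ = q τ ∧ ζ₁ τ = ζ τ := by
  intro τ hτ
  set f : ℝ → ℝ × ℝ := fun t => (q₁ t, ζ₁ t) with hfdef
  set g : ℝ → ℝ × ℝ := fun t => (q t, ζ t) with hgdef
  have hvlip : ∀ t, LipschitzWith (LL C) (vf C β t) := lip hC hβ
  have key : EqOn f g (Icc 0 τ) := by
    apply ODE_solution_unique (v := vf C β) (K := LL C) hvlip
    · intro t ht
      exact (((hder₁ t ht.1).1.continuousAt).prodMk ((hder₁ t ht.1).2.continuousAt)).continuousWithinAt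
    · intro t ht
      have hd := ((hder₁ t ht.1).1).prodMk ((hder₁ t ht.1).2)
      have he : vf C β t (f t) = (-q₁ t + C * ζ₁ t * Real.exp (-β * t),
          C * (q₁ t + ζ₁ t * Real.exp (-β * t))) := by
        simp [vf, hfdef, gg_of_nonneg hβ ht.1]
      rw [he]
      exact hd.hasDerivWithinAt
    · intro t ht
      exact (((hder t ht.1).1.continuousAt).prodMk ((hder t ht.1).2.continuousAt)).continuousWithinAt
    · intro t ht
      have hd := ((hder t ht.1).1).prodMk ((hder t ht.1).2)
      have he : vf C β t (g t) = (-q t + C * ζ t * Real.exp (-β * t),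
          C * (q t + ζ t * Real.exp (-β * t))) := by
        simp [vf, hgdef, gg_of_nonneg hβ ht.1]
      rw [he]
      exact hd.hasDerivWithinAt
    · simp [hfdef, hgdef, h00, h01]
  have h := key (right_mem_Icc.2 hτ)
  exact ⟨congrArg Prod.fst h, congrArg Prod.snd h⟩



end Stmt13Aux

theorem stmt_13
    (C β q₀ ζ₀ : ℝ) (hC : 0 < C) (hβ : β ∈ Set.Ioo (0:ℝ) (1/2))
    (hq₀ : 0 < q₀) (hζ₀ : 0 < ζ₀) :
    ∃ q ζ : ℝ → ℝ,
      q 0 = q₀ ∧ ζ 0 = ζ₀ ∧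
      (∀ τ ≥ (0:ℝ), HasDerivAt q (-q τ + C * ζ τ * Real.exp (-β * τ)) τ ∧
        HasDerivAt ζ (C * (q τ + ζ τ * Real.exp (-β * τ))) τ) ∧
      (∀ q₁ ζ₁ : ℝ → ℝ, q₁ 0 = q₀ → ζ₁ 0 = ζ₀ →
        (∀ τ ≥ (0:ℝ), HasDerivAt q₁ (-q₁ τ + C * ζ₁ τ * Real.exp (-β * τ)) τ ∧
          HasDerivAt ζ₁ (C * (q₁ τ + ζ₁ τ * Real.exp (-β * τ))) τ) →
        ∀ τ ≥ (0:ℝ), q₁ τ = q τ ∧ ζ₁ τ = ζ τ) ∧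
      (∀ τ ≥ (0:ℝ), 0 < q τ ∧ 0 < ζ τ) ∧
      MonotoneOn ζ (Set.Ici 0) ∧
      (∃ M : ℝ, ∀ τ ≥ (0:ℝ), ζ τ ≤ M) ∧
      (∃ K > (0:ℝ), ∃ μ > (0:ℝ), ∀ τ ≥ (0:ℝ), q τ ≤ K * Real.exp (-μ * τ)) := by
  obtain ⟨hβ0, hβ2⟩ := hβ
  have hβ1 : β < 1 := by linarith
  obtain ⟨f, hf0, hfd⟩ := Stmt13Aux.global_sol hC hβ0 (q₀, ζ₀)
  have hh := Stmt13Aux.hstep_pos hC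
  set q : ℝ → ℝ := fun τ => (f τ).1 with hqdef
  set ζ : ℝ → ℝ := fun τ => (f τ).2 with hζdef
  have h0q : q 0 = q₀ := by rw [hqdef]; simp [hf0]
  have h0ζ : ζ 0 = ζ₀ := by rw [hζdef]; simp [hf0]
  have hder : ∀ τ ≥ (0:ℝ), HasDerivAt q (-q τ + C * ζ τ * Real.exp (-β * τ)) τ ∧
      HasDerivAt ζ (C * (q τ + ζ τ * Real.exp (-β * τ))) τ := by
    intro τ hτ
    have hd := hfd τ (by linarith)
    obtain ⟨h1, h2⟩ := Stmt13Aux.hasDerivAt_components hd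
    constructor
    · convert h1 using 1
      simp [Stmt13Aux.vf, Stmt13Aux.gg_of_nonneg hβ0 hτ, hqdef, hζdef]
    · convert h2 using 1
      simp [Stmt13Aux.vf, Stmt13Aux.gg_of_nonneg hβ0 hτ, hqdef, hζdef]
  have hpos : ∀ τ ≥ (0:ℝ), 0 < q τ ∧ 0 < ζ τ :=
    Stmt13Aux.positivity_lemma hC hβ0 hq₀ hζ₀ h0q h0ζ hder
  have hM : ∀ τ ≥ (0:ℝ), ζ τ ≤ (ζ₀ + C * q₀) * Real.exp (C * (1 + C) / β) :=
    Stmt13Aux.zeta_bound hC hβ0 hq₀ hζ₀ h0q h0ζ hder hpos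
  have hMpos : 0 < (ζ₀ + C * q₀) * Real.exp (C * (1 + C) / β) := by positivity
  refine ⟨q, ζ, h0q, h0ζ, hder, ?_, hpos, ?_, ⟨_, hM⟩, ?_⟩
  · intro q₁ ζ₁ h1 h2 hder₁
    exact Stmt13Aux.uniqueness hC hβ0 (by rw [h1, h0q]) (by rw [h2, h0ζ]) hder hder₁
  · exact Stmt13Aux.zeta_mono hC hβ0 hpos hder
  · refine ⟨q₀ + C * ((ζ₀ + C * q₀) * Real.exp (C * (1 + C) / β)) / (1 - β),
      by have h1b : (0:ℝ) < 1 - β := by linarith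
         positivity,
      β, hβ0, ?_⟩
    exact Stmt13Aux.q_decay hC hβ0 hβ1 hq₀ h0q hder hM hMpos
end

section
/- If φ : [0,∞) → ℝ is continuous, twice continuously differentiable on (0,∞), satisfies φ''(ξ) + (ξ/2) φ'(ξ) + φ(ξ) = 0 for all ξ > 0, φ(0) = 0 and lim_{ξ→+∞} φ(ξ) = 0, then there exists c ∈ ℝ such that φ(ξ) = c · ξ e^{−ξ²/4} for all ξ ≥ 0. -/
open Real Set Filter

/-- Auxiliary: a function with vanishing derivative on `Ioi 0` is constant there. -/
lemma aux_const_of_deriv_zero (F : ℝ → ℝ)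
    (hF : ∀ ξ ∈ Set.Ioi (0:ℝ), HasDerivAt F 0 ξ) :
    ∀ ξ ∈ Set.Ioi (0:ℝ), F ξ = F 1 := by
  have hconv : Convex ℝ (Set.Ioi (0:ℝ)) := convex_Ioi 0
  have hcont : ContinuousOn F (Set.Ioi 0) :=
    fun x hx => (hF x hx).continuousAt.continuousWithinAt
  have hdiff : DifferentiableOn ℝ F (interior (Set.Ioi (0:ℝ))) := by
    rw [interior_Ioi]
    exact fun x hx => (hF x hx).differentiableAt.differentiableWithinAt
  have hmono : MonotoneOn F (Set.Ioi 0) := by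
    apply monotoneOn_of_deriv_nonneg hconv hcont hdiff
    intro x hx
    rw [interior_Ioi] at hx
    rw [(hF x hx).deriv]
  have hanti : AntitoneOn F (Set.Ioi 0) := by
    apply antitoneOn_of_deriv_nonpos hconv hcont hdiff
    intro x hx
    rw [interior_Ioi] at hx
    rw [(hF x hx).deriv]
  intro ξ hξ
  have h1 : (1:ℝ) ∈ Set.Ioi (0:ℝ) := by norm_num
  rcases le_total ξ 1 with h | h
  · exact le_antisymm (hmono hξ h1 h) (hanti hξ h1 h)
  · exact le_antisymm (hanti h1 hξ h) (hmono h1 hξ h)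

theorem stmt_14
    (φ : ℝ → ℝ)
    (hc : ContinuousOn φ (Set.Ici 0))
    (hsm : ContDiffOn ℝ 2 φ (Set.Ioi 0))
    (hode : ∀ ξ > (0:ℝ), deriv (deriv φ) ξ + (ξ / 2) * deriv φ ξ + φ ξ = 0)
    (h0 : φ 0 = 0)
    (hlim : Filter.Tendsto φ Filter.atTop (nhds 0)) :
    ∃ c : ℝ, ∀ ξ ≥ (0:ℝ), φ ξ = c * (ξ * Real.exp (-ξ^2/4)) := by
  have hopen : IsOpen (Set.Ioi (0:ℝ)) := isOpen_Ioi
  -- basic derivative facts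
  have hdφ : ∀ ξ ∈ Set.Ioi (0:ℝ), HasDerivAt φ (deriv φ ξ) ξ := by
    intro ξ hξ
    exact ((hsm.differentiableOn (by norm_num)).differentiableAt
      (hopen.mem_nhds hξ)).hasDerivAt
  have hdφ' : ∀ ξ ∈ Set.Ioi (0:ℝ), HasDerivAt (deriv φ) (deriv (deriv φ) ξ) ξ := by
    intro ξ hξ
    have h1 : ContDiffOn ℝ 1 (deriv φ) (Set.Ioi (0:ℝ)) :=
      hsm.deriv_of_isOpen hopen (by norm_num)
    exact ((h1.differentiableOn (by norm_num)).differentiableAt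
      (hopen.mem_nhds hξ)).hasDerivAt
  -- The (rescaled) Wronskian with φ₀
  set W : ℝ → ℝ := fun ξ => φ ξ * (1 - ξ^2/2) - ξ * deriv φ ξ with hWdef
  have hW0 : ∀ ξ ∈ Set.Ioi (0:ℝ), HasDerivAt W 0 ξ := by
    intro ξ hξ
    have ha : HasDerivAt (fun x : ℝ => 1 - x^2/2) (-ξ) ξ := by
      have := ((hasDerivAt_pow 2 ξ).div_const 2).const_sub 1
      refine this.congr_deriv (Eq.symm ?_)
      ring
    have h1 : HasDerivAt (fun x => φ x * (1 - x^2/2))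
        (deriv φ ξ * (1 - ξ^2/2) + φ ξ * (-ξ)) ξ := (hdφ ξ hξ).mul ha
    have h2 : HasDerivAt (fun x => x * deriv φ x)
        (1 * deriv φ ξ + ξ * deriv (deriv φ) ξ) ξ :=
      (hasDerivAt_id ξ).mul (hdφ' ξ hξ)
    have h3 := h1.sub h2
    refine h3.congr_deriv (Eq.symm ?_)
    have h4 := hode ξ hξ
    linear_combination ξ * h4
  set K : ℝ := W 1 with hKdef
  have hWK : ∀ ξ ∈ Set.Ioi (0:ℝ), φ ξ * (1 - ξ^2/2) - ξ * deriv φ ξ = K :=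
    aux_const_of_deriv_zero W hW0
  -- the ratio-type function g
  set g : ℝ → ℝ := fun ξ => (φ ξ * Real.exp (ξ^2/4) - K) / ξ with hgdef
  have hg : ∀ ξ ∈ Set.Ioi (0:ℝ),
      HasDerivAt g (K * (1 - Real.exp (ξ^2/4)) / ξ^2) ξ := by
    intro ξ hξ
    have hξ0 : (0:ℝ) < ξ := hξ
    have hexp : HasDerivAt (fun x : ℝ => Real.exp (x^2/4))
        (Real.exp (ξ^2/4) * (ξ/2)) ξ := by
      have hp : HasDerivAt (fun x : ℝ => x^2/4) (ξ/2) ξ := by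
        have := (hasDerivAt_pow 2 ξ).div_const 4
        refine this.congr_deriv (Eq.symm ?_)
        ring
      exact hp.exp
    have hnum : HasDerivAt (fun x => φ x * Real.exp (x^2/4) - K)
        (deriv φ ξ * Real.exp (ξ^2/4) + φ ξ * (Real.exp (ξ^2/4) * (ξ/2))) ξ :=
      ((hdφ ξ hξ).mul hexp).sub_const K
    have hq := hnum.div (hasDerivAt_id ξ) (ne_of_gt hξ0)
    refine hq.congr_deriv (Eq.symm ?_)
    have hW := hWK ξ hξ
    simp only [id_eq]
    linear_combination (Real.exp (ξ^2/4) / ξ^2) * hW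
  -- φ tends to 0 from the right at 0
  have hφ0 : Filter.Tendsto φ (nhdsWithin 0 (Set.Ioi 0)) (nhds 0) := by
    have := (hc 0 Set.self_mem_Ici).tendsto
    rw [h0] at this
    exact this.mono_left (nhdsWithin_mono _ Set.Ioi_subset_Ici_self)
  -- the comparison function tends to K
  have hcomp : ∀ a : ℝ, Filter.Tendsto (fun ξ => (K + ξ * a) * Real.exp (-ξ^2/4))
      (nhdsWithin 0 (Set.Ioi 0)) (nhds K) := by
    intro a
    have hcont : Continuous (fun ξ : ℝ => (K + ξ * a) * Real.exp (-ξ^2/4)) :=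
      (continuous_const.add (continuous_id.mul continuous_const)).mul
        (Real.continuous_exp.comp ((continuous_pow 2).neg.div_const 4))
    have := (hcont.tendsto 0).mono_left (nhdsWithin_le_nhds (s := Set.Ioi (0:ℝ)))
    simpa using this
  have hmem : ∀ᶠ ξ in nhdsWithin 0 (Set.Ioi (0:ℝ)), ξ ∈ Set.Ioc (0:ℝ) 1 := by
    have h1 : ∀ᶠ ξ in nhdsWithin 0 (Set.Ioi (0:ℝ)), ξ ∈ Set.Ioi (0:ℝ) :=
      eventually_mem_nhdsWithin
    have h2 : ∀ᶠ ξ in nhdsWithin 0 (Set.Ioi (0:ℝ)), ξ < 1 := by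
      apply eventually_nhdsWithin_of_eventually_nhds
      exact Filter.Tendsto.eventually_lt_const (by norm_num) Filter.tendsto_id
    filter_upwards [h1, h2] with ξ hξ hξ1
    exact ⟨hξ, le_of_lt hξ1⟩
  have hgcont : ContinuousOn g (Set.Ioc (0:ℝ) 1) := by
    intro x hx
    exact ((hg x hx.1).continuousAt).continuousWithinAt
  have hgdiff : DifferentiableOn ℝ g (interior (Set.Ioc (0:ℝ) 1)) := by
    intro x hx
    rw [interior_Ioc] at hx
    exact ((hg x hx.1).differentiableAt).differentiableWithinAt
  have hderiv_eq : ∀ x ∈ interior (Set.Ioc (0:ℝ) 1),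
      deriv g x = K * (1 - Real.exp (x^2/4)) / x^2 := by
    intro x hx
    rw [interior_Ioc] at hx
    exact (hg x hx.1).deriv
  -- K = 0
  have hK0 : K = 0 := by
    rcases le_total K 0 with hK | hK
    · -- g is monotone on Ioc 0 1, giving an upper bound for φ near 0
      have hmono : MonotoneOn g (Set.Ioc (0:ℝ) 1) := by
        apply monotoneOn_of_deriv_nonneg (convex_Ioc 0 1) hgcont hgdiff
        intro x hx
        rw [hderiv_eq x hx]
        rw [interior_Ioc] at hx
        have h1 : (1:ℝ) - Real.exp (x^2/4) ≤ 0 := by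
          have : (1:ℝ) ≤ Real.exp (x^2/4) := by
            rw [← Real.exp_zero]
            apply Real.exp_le_exp.mpr
            positivity
          linarith
        have h2 : (0:ℝ) ≤ K * (1 - Real.exp (x^2/4)) := by
          nlinarith [mul_nonneg (neg_nonneg.mpr hK) (neg_nonneg.mpr h1)]
        exact div_nonneg h2 (sq_nonneg x)
      have hle : ∀ᶠ ξ in nhdsWithin 0 (Set.Ioi (0:ℝ)),
          φ ξ ≤ (K + ξ * g 1) * Real.exp (-ξ^2/4) := by
        filter_upwards [hmem] with ξ hξ
        have h1 : g ξ ≤ g 1 := hmono hξ (by norm_num) hξ.2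
        have hξ0 : (0:ℝ) < ξ := hξ.1
        have h2 : φ ξ * Real.exp (ξ^2/4) - K ≤ ξ * g 1 := by
          have := (div_le_iff₀ hξ0).mp h1
          linarith
        have h3 : φ ξ * Real.exp (ξ^2/4) ≤ K + ξ * g 1 := by linarith
        have hE : (0:ℝ) < Real.exp (ξ^2/4) := Real.exp_pos _
        have := (div_le_div_iff_of_pos_right hE).mpr h3
        have h4 : φ ξ ≤ (K + ξ * g 1) / Real.exp (ξ^2/4) := by
          rwa [mul_div_cancel_right₀ _ (ne_of_gt hE)] at this
        rwa [neg_div, Real.exp_neg, ← div_eq_mul_inv]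
      have := le_of_tendsto_of_tendsto hφ0 (hcomp (g 1)) hle
      linarith
    · -- g is antitone on Ioc 0 1, giving a lower bound for φ near 0
      have hanti : AntitoneOn g (Set.Ioc (0:ℝ) 1) := by
        apply antitoneOn_of_deriv_nonpos (convex_Ioc 0 1) hgcont hgdiff
        intro x hx
        rw [hderiv_eq x hx]
        rw [interior_Ioc] at hx
        have h1 : (1:ℝ) - Real.exp (x^2/4) ≤ 0 := by
          have : (1:ℝ) ≤ Real.exp (x^2/4) := by
            rw [← Real.exp_zero]
            apply Real.exp_le_exp.mpr
            positivity
          linarith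
        have h2 : K * (1 - Real.exp (x^2/4)) ≤ 0 := mul_nonpos_of_nonneg_of_nonpos hK h1
        exact div_nonpos_of_nonpos_of_nonneg h2 (sq_nonneg x)
      have hle : ∀ᶠ ξ in nhdsWithin 0 (Set.Ioi (0:ℝ)),
          (K + ξ * g 1) * Real.exp (-ξ^2/4) ≤ φ ξ := by
        filter_upwards [hmem] with ξ hξ
        have h1 : g 1 ≤ g ξ := hanti hξ (by norm_num) hξ.2
        have hξ0 : (0:ℝ) < ξ := hξ.1
        have h2 : ξ * g 1 ≤ φ ξ * Real.exp (ξ^2/4) - K := by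
          have := (le_div_iff₀ hξ0).mp h1
          linarith
        have h3 : K + ξ * g 1 ≤ φ ξ * Real.exp (ξ^2/4) := by linarith
        have hE : (0:ℝ) < Real.exp (ξ^2/4) := Real.exp_pos _
        have := (div_le_div_iff_of_pos_right hE).mpr h3
        have h4 : (K + ξ * g 1) / Real.exp (ξ^2/4) ≤ φ ξ := by
          rwa [mul_div_cancel_right₀ _ (ne_of_gt hE)] at this
        rwa [neg_div, Real.exp_neg, ← div_eq_mul_inv]
      have := le_of_tendsto_of_tendsto (hcomp (g 1)) hφ0 hle
      linarith
  -- now g has zero derivative, hence constant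
  have hg0 : ∀ ξ ∈ Set.Ioi (0:ℝ), HasDerivAt g 0 ξ := by
    intro ξ hξ
    have := hg ξ hξ
    rw [hK0] at this
    simpa using this
  have hgc := aux_const_of_deriv_zero g hg0
  refine ⟨g 1, ?_⟩
  intro ξ hξ
  rcases eq_or_lt_of_le hξ with h | h
  · rw [← h, h0]
    simp
  · have hgξ : (φ ξ * Real.exp (ξ^2/4) - K) / ξ = g 1 := hgc ξ h
    have hE : Real.exp (ξ^2/4) ≠ 0 := Real.exp_ne_zero _
    rw [hK0, sub_zero, div_eq_iff (ne_of_gt h)] at hgξ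
    rw [show -ξ^2/4 = -(ξ^2/4) by ring, Real.exp_neg]
    field_simp
    linear_combination hgξ
end
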